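/- Let F ∈ R[x] have total degree ≤ d, and let ∇'F(x,y) and ∇''F(x,y) be two difference derivatives of F all of whose components have total degree ≤ d − 1. Then there exist polynomials T^{kl}(x,y) ∈ R[x,y] for 1 ≤ k < l ≤ n, each of total degree ≤ d − 2, such that for every m = 1,…,n: ∇'^mF(x,y) − ∇''^mF(x,y) = Σ_{k < m} (x_k − y_k)·T^{km}(x,y) − Σ_{l > m} (x_l − y_l)·T^{ml}(x,y). -/

import Mathlib

open MvPolynomial Finset

noncomputable section

variable {R : Type*} [CommRing R] {n : ℕ}

/-- Total degree of a multivariate polynomial, valued in `WithBot ℤ`,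
with the convention `deg 0 = ⊥` (i.e. `-∞`). -/
def mdeg {σ S : Type*} [CommSemiring S] (F : MvPolynomial σ S) : WithBot ℤ :=
  F.support.sup fun m => ((m.sum fun _ e => e : ℕ) : ℤ)

/-- The embedding `R[x] → R[x,y]`, `x_i ↦ x_i` (the x-variables are `Sum.inl`,
the y-variables are `Sum.inr`). -/
def toX : MvPolynomial (Fin n) R →ₐ[R] MvPolynomial (Fin n ⊕ Fin n) R :=
  rename Sum.inl

/-- The embedding `R[x] → R[x,y]`, `x_i ↦ y_i`. -/
def toY : MvPolynomial (Fin n) R →ₐ[R] MvPolynomial (Fin n ⊕ Fin n) R :=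
  rename Sum.inr

/-- `D = (∇¹F, …, ∇ⁿF)` is a difference derivative of `F`:
`∑ k, (x_k - y_k) * ∇ᵏF(x,y) = F(x) - F(y)`. -/
def IsDiffDeriv (F : MvPolynomial (Fin n) R)
    (D : Fin n → MvPolynomial (Fin n ⊕ Fin n) R) : Prop :=
  ∑ k : Fin n, (X (Sum.inl k) - X (Sum.inr k)) * D k = toX F - toY F

/-- A difference derivative of `F` is monotonous if each component has total degree
`≤ deg F - 1` (equivalently `deg (∇ᵏF) + 1 ≤ deg F` in `WithBot ℤ`). -/
def IsMonotonous (F : MvPolynomial (Fin n) R)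
    (D : Fin n → MvPolynomial (Fin n ⊕ Fin n) R) : Prop :=
  ∀ k, mdeg (D k) + 1 ≤ mdeg F

/-- `δ_f = ∑ᵢ (deg fᵢ - 1)`. -/
def deltaF (f : Fin n → MvPolynomial (Fin n) R) : ℤ :=
  ∑ i, (((f i).totalDegree : ℤ) - 1)

/-- `(f)^{≤ d}_x`: sums `∑ fᵢ gᵢ` with `deg fᵢ + deg gᵢ ≤ d` for every `i`. -/
def boundedSpan (f : Fin n → MvPolynomial (Fin n) R) (d : WithBot ℤ) :
    Set (MvPolynomial (Fin n) R) :=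
  {F | ∃ g : Fin n → MvPolynomial (Fin n) R,
    F = ∑ i, f i * g i ∧ ∀ i, mdeg (f i) + mdeg (g i) ≤ d}

/-- A linear functional `L` annuls a set `S` if it vanishes on it. -/
def Annuls (L : MvPolynomial (Fin n) R →ₗ[R] R) (S : Set (MvPolynomial (Fin n) R)) : Prop :=
  ∀ F ∈ S, L F = 0

/-- `L(y_*).P` : apply the functional `L` to the `y`-part of `P ∈ R[x,y]`,
i.e. if `P = ∑_α A_α(x) y^α` then `L(y_*).P = ∑_α L(y^α) • A_α(x)`. -/
def applyY (L : MvPolynomial (Fin n) R →ₗ[R] R) (P : MvPolynomial (Fin n ⊕ Fin n) R) :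
    MvPolynomial (Fin n) R :=
  ∑ m ∈ P.support,
    C (L (monomial (Finsupp.sumFinsuppAddEquivProdFinsupp m).2 (1 : R)) * P.coeff m) *
      monomial (Finsupp.sumFinsuppAddEquivProdFinsupp m).1 (1 : R)

/-- `det‖∇f(x,y) ∇F(x,y); f(x) F(x)‖` : the `(n+1) × (n+1)` determinant whose entry `(k,i)`
is `∇ᵏfᵢ(x,y)` for `k, i ≤ n`, entry `(k, n+1)` is `∇ᵏF(x,y)`, entry `(n+1, i)` is `fᵢ(x)`,
and entry `(n+1, n+1)` is `F(x)`.  Here `Df i` is the tuple `(∇¹fᵢ, …, ∇ⁿfᵢ)`. -/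
def ddetX (f : Fin n → MvPolynomial (Fin n) R)
    (Df : Fin n → Fin n → MvPolynomial (Fin n ⊕ Fin n) R)
    (F : MvPolynomial (Fin n) R) (DF : Fin n → MvPolynomial (Fin n ⊕ Fin n) R) :
    MvPolynomial (Fin n ⊕ Fin n) R :=
  Matrix.det (Matrix.of fun k i : Fin (n + 1) =>
    if hk : (k : ℕ) < n then
      if hi : (i : ℕ) < n then Df ⟨i, hi⟩ ⟨k, hk⟩ else DF ⟨k, hk⟩
    else
      if hi : (i : ℕ) < n then toX (f ⟨i, hi⟩) else toX F)

/-- `det‖∇f(x,y) ∇F(x,y); f(y) F(y)‖` : as `ddetX` but with last row `(f₁(y),…,fₙ(y),F(y))`. -/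
def ddetY (f : Fin n → MvPolynomial (Fin n) R)
    (Df : Fin n → Fin n → MvPolynomial (Fin n ⊕ Fin n) R)
    (F : MvPolynomial (Fin n) R) (DF : Fin n → MvPolynomial (Fin n ⊕ Fin n) R) :
    MvPolynomial (Fin n ⊕ Fin n) R :=
  Matrix.det (Matrix.of fun k i : Fin (n + 1) =>
    if hk : (k : ℕ) < n then
      if hi : (i : ℕ) < n then Df ⟨i, hi⟩ ⟨k, hk⟩ else DF ⟨k, hk⟩
    else
      if hi : (i : ℕ) < n then toY (f ⟨i, hi⟩) else toY F)


section Aux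

variable {σ S : Type*} [CommSemiring S]

lemma mdeg_le_iff {P : MvPolynomial σ S} {c : ℤ} :
    mdeg P ≤ (c : WithBot ℤ) ↔
      ∀ m ∈ P.support, ((m.sum fun _ e => e : ℕ) : ℤ) ≤ c := by
  rw [mdeg, Finset.sup_le_iff]
  constructor
  · intro h m hm
    exact_mod_cast h m hm
  · intro h m hm
    exact_mod_cast h m hm

lemma mdeg_zero' : mdeg (0 : MvPolynomial σ S) = ⊥ := by simp [mdeg]

lemma mdeg_transfer {τ : Type*} {P : MvPolynomial σ S} {Q : MvPolynomial τ S} {c : ℤ}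
    (hP : mdeg P ≤ (c : WithBot ℤ))
    (h0 : P = 0 → Q = 0) (hd : Q.totalDegree ≤ P.totalDegree) :
    mdeg Q ≤ (c : WithBot ℤ) := by
  by_cases hQ : Q = 0
  · simp [hQ, mdeg]
  have hP0 : P ≠ 0 := fun h => hQ (h0 h)
  rw [mdeg_le_iff] at hP ⊢
  intro m hm
  obtain ⟨m', hm', hsup⟩ := P.support.exists_mem_eq_sup
      (Finset.nonempty_iff_ne_empty.mpr (by rwa [Ne, support_eq_empty])) (fun m' : (σ →₀ ℕ) => m'.sum fun _ e => e)
  have h2 : (P.totalDegree : ℤ) ≤ c := by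
    rw [totalDegree, hsup]; exact hP m' hm'
  have h1 : (m.sum fun _ e => e) ≤ Q.totalDegree := le_totalDegree hm
  have h3 : ((m.sum fun _ e => e : ℕ) : ℤ) ≤ (P.totalDegree : ℤ) := by
    exact_mod_cast h1.trans hd
  exact h3.trans h2

lemma mdeg_sub_le {R' : Type*} [CommRing R'] {P Q : MvPolynomial σ R'} {c : ℤ}
    (hP : mdeg P ≤ (c : WithBot ℤ)) (hQ : mdeg Q ≤ (c : WithBot ℤ)) :
    mdeg (P - Q) ≤ (c : WithBot ℤ) := by
  rw [mdeg_le_iff] at hP hQ ⊢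
  intro m hm
  rw [mem_support_iff, coeff_sub] at hm
  by_cases h : coeff m P ≠ 0
  · exact hP m (mem_support_iff.mpr h)
  · push_neg at h
    rw [h, zero_sub, neg_ne_zero] at hm
    exact hQ m (mem_support_iff.mpr hm)

lemma mdeg_neg_le {R' : Type*} [CommRing R'] {P : MvPolynomial σ R'} {c : ℤ}
    (hP : mdeg P ≤ (c : WithBot ℤ)) : mdeg (-P) ≤ (c : WithBot ℤ) := by
  rw [mdeg_le_iff] at hP ⊢
  intro m hm
  rw [support_neg] at hm
  exact hP m hm

lemma mdeg_rename_le {τ : Type*} (f : σ → τ) {P : MvPolynomial σ S} {c : ℤ}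
    (hP : mdeg P ≤ (c : WithBot ℤ)) : mdeg (rename f P) ≤ (c : WithBot ℤ) := by
  refine mdeg_transfer (P := P) (Q := rename f P) hP ?_ (totalDegree_rename_le f P)
  intro h
  rw [h, map_zero]

lemma totalDegree_X_le' (s : σ) : (X s : MvPolynomial σ S).totalDegree ≤ 1 := by
  refine (totalDegree_monomial_le _ _).trans ?_
  simp

lemma totalDegree_aeval_le' {τ : Type*} (g : σ → MvPolynomial τ S)
    (hg : ∀ i, (g i).totalDegree ≤ 1) (P : MvPolynomial σ S) :
    (aeval g P).totalDegree ≤ P.totalDegree := by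
  rw [aeval_def, eval₂_eq]
  refine (totalDegree_finset_sum _ _).trans (Finset.sup_le fun d hd => ?_)
  have h1 : (∏ i ∈ d.support, g i ^ d i).totalDegree ≤ ∑ i ∈ d.support, d i := by
    refine (totalDegree_finset_prod _ _).trans (Finset.sum_le_sum fun i _ => ?_)
    refine (totalDegree_pow _ _).trans ?_
    calc d i * (g i).totalDegree ≤ d i * 1 := Nat.mul_le_mul_left _ (hg i)
      _ = d i := mul_one _
  calc (algebraMap S (MvPolynomial τ S) (coeff d P) * ∏ i ∈ d.support, g i ^ d i).totalDegree
      ≤ (algebraMap S (MvPolynomial τ S) (coeff d P)).totalDegree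
          + (∏ i ∈ d.support, g i ^ d i).totalDegree := totalDegree_mul _ _
    _ = (∏ i ∈ d.support, g i ^ d i).totalDegree := by
        rw [algebraMap_eq, totalDegree_C, zero_add]
    _ ≤ ∑ i ∈ d.support, d i := h1
    _ = d.sum fun _ e => e := rfl
    _ ≤ P.totalDegree := le_totalDegree hd

end Aux

section AuxV

/-- the substitution `x_j ↦ y_j` (on variable names) -/
def fJ (j : Fin n) : Fin n ⊕ Fin n → Fin n ⊕ Fin n :=
  fun v => if v = Sum.inl j then Sum.inr j else v

/-- `x_j ↦ x_j + y_j`, other variables fixed -/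
def gP (j : Fin n) : Fin n ⊕ Fin n → MvPolynomial (Fin n ⊕ Fin n) R :=
  fun v => if v = Sum.inl j then X (Sum.inl j) + X (Sum.inr j) else X v

/-- `x_j ↦ x_j - y_j`, other variables fixed -/
def gM (j : Fin n) : Fin n ⊕ Fin n → MvPolynomial (Fin n ⊕ Fin n) R :=
  fun v => if v = Sum.inl j then X (Sum.inl j) - X (Sum.inr j) else X v

/-- `x_j ↦ 0`, other variables fixed -/
def g0 (j : Fin n) : Fin n ⊕ Fin n → MvPolynomial (Fin n ⊕ Fin n) R :=
  fun v => if v = Sum.inl j then 0 else X v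

lemma gP_deg (j : Fin n) : ∀ v, ((gP (R := R) j) v).totalDegree ≤ 1 := by
  intro v
  by_cases h : v = Sum.inl j
  · subst h
    simp only [gP, if_pos rfl]
    exact (totalDegree_add _ _).trans (max_le (totalDegree_X_le' _) (totalDegree_X_le' _))
  · simp only [gP, if_neg h]
    exact totalDegree_X_le' _

lemma gM_deg (j : Fin n) : ∀ v, ((gM (R := R) j) v).totalDegree ≤ 1 := by
  intro v
  by_cases h : v = Sum.inl j
  · subst h
    simp only [gM, if_pos rfl]
    refine (totalDegree_sub _ _).trans (max_le (totalDegree_X_le' _) (totalDegree_X_le' _))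
  · simp only [gM, if_neg h]
    exact totalDegree_X_le' _

lemma aeval_gM_gP (j : Fin n) (P : MvPolynomial (Fin n ⊕ Fin n) R) :
    aeval (gM (R := R) j) (aeval (gP (R := R) j) P) = P := by
  rw [← AlgHom.comp_apply, comp_aeval]
  have h : (fun i => aeval (gM (R := R) j) (gP (R := R) j i)) = X := by
    funext v
    by_cases h : v = Sum.inl j
    · subst h; simp [gP, gM]
    · simp [gP, gM, h]
  rw [h, aeval_X_left_apply]

lemma aeval_gP_gM (j : Fin n) (P : MvPolynomial (Fin n ⊕ Fin n) R) :
    aeval (gP (R := R) j) (aeval (gM (R := R) j) P) = P := by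
  rw [← AlgHom.comp_apply, comp_aeval]
  have h : (fun i => aeval (gP (R := R) j) (gM (R := R) j i)) = X := by
    funext v
    by_cases h : v = Sum.inl j
    · subst h; simp [gP, gM]
    · simp [gP, gM, h]
  rw [h, aeval_X_left_apply]

lemma aeval_g0_gP (j : Fin n) (P : MvPolynomial (Fin n ⊕ Fin n) R) :
    aeval (g0 (R := R) j) (aeval (gP (R := R) j) P) = rename (fJ j) P := by
  rw [← AlgHom.comp_apply, comp_aeval]
  have h : (fun i => aeval (g0 (R := R) j) (gP (R := R) j i)) = (X ∘ fJ j) := by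
    funext v
    by_cases h : v = Sum.inl j
    · subst h; simp [gP, g0, fJ]
    · simp [gP, g0, fJ, h]
  rw [h, rename_eq_aeval]

lemma coeff_aeval_g0 (j : Fin n) (P : MvPolynomial (Fin n ⊕ Fin n) R)
    (m : (Fin n ⊕ Fin n) →₀ ℕ) (hm : m (Sum.inl j) = 0) :
    coeff m (aeval (g0 (R := R) j) P) = coeff m P := by
  induction P using MvPolynomial.induction_on' with
  | monomial u a =>
    rw [aeval_monomial]
    by_cases hu : u (Sum.inl j) = 0
    · have hprod : (u.prod fun i e => (g0 (R := R) j) i ^ e)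
          = u.prod fun i e => (X i : MvPolynomial (Fin n ⊕ Fin n) R) ^ e := by
        apply Finsupp.prod_congr
        intro i hi
        have hne : i ≠ Sum.inl j := by
          intro h; subst h; exact (Finsupp.mem_support_iff.mp hi) hu
        simp [g0, hne]
      rw [hprod, algebraMap_eq, ← monomial_eq]
    · have hmem : Sum.inl j ∈ u.support := Finsupp.mem_support_iff.mpr hu
      have hfac : (g0 (R := R) j) (Sum.inl j) ^ u (Sum.inl j) = 0 := by
        simp [g0, zero_pow hu]
      rw [Finsupp.prod, Finset.prod_eq_zero hmem hfac, mul_zero, coeff_zero,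
        coeff_monomial, if_neg]
      intro h
      rw [h] at hu
      exact hu hm
  | add p q hp hq => rw [map_add, coeff_add, hp, hq, coeff_add]

lemma exists_div (j : Fin n) (P : MvPolynomial (Fin n ⊕ Fin n) R)
    (h : rename (fJ j) P = 0) :
    ∃ H, P = (X (Sum.inl j) - X (Sum.inr j)) * H ∧
      ∀ c : ℤ, mdeg P ≤ (c : WithBot ℤ) → mdeg H ≤ ((c - 1 : ℤ) : WithBot ℤ) := by
  set Q := aeval (gP (R := R) j) P with hQdef
  have hQc : ∀ m : (Fin n ⊕ Fin n) →₀ ℕ, m (Sum.inl j) = 0 → coeff m Q = 0 := by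
    intro m hm
    rw [← coeff_aeval_g0 j Q m hm, hQdef, aeval_g0_gP, h, coeff_zero]
  set s : (Fin n ⊕ Fin n) →₀ ℕ := Finsupp.single (Sum.inl j) 1 with hs
  have hmod : Q.modMonomial s = 0 := by
    ext m
    rw [coeff_zero]
    by_cases hle : s ≤ m
    · exact coeff_modMonomial_of_le Q hle
    · rw [coeff_modMonomial_of_not_le Q hle]
      apply hQc
      by_contra h0
      exact hle (hs ▸ Finsupp.single_le_iff.mpr (Nat.one_le_iff_ne_zero.mpr h0))
  have hQeq : Q = monomial s 1 * Q.divMonomial s := by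
    conv_lhs => rw [← Q.divMonomial_add_modMonomial s]
    rw [hmod, add_zero]
  refine ⟨aeval (gM (R := R) j) (Q.divMonomial s), ?_, ?_⟩
  · have hP : P = aeval (gM (R := R) j) Q := (aeval_gM_gP j P).symm
    have hm1 : aeval (gM (R := R) j) (monomial s (1 : R))
        = X (Sum.inl j) - X (Sum.inr j) := by
      rw [aeval_monomial, hs, Finsupp.prod_single_index (by simp)]
      simp [gM]
    calc P = aeval (gM (R := R) j) Q := hP
      _ = aeval (gM (R := R) j) (monomial s 1 * Q.divMonomial s) := by rw [← hQeq]
      _ = (X (Sum.inl j) - X (Sum.inr j)) * aeval (gM (R := R) j) (Q.divMonomial s) := by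
          rw [map_mul, hm1]
  · intro c hc
    have hQd : mdeg Q ≤ (c : WithBot ℤ) :=
      mdeg_transfer hc (fun h0 => by simp [hQdef, h0])
        (totalDegree_aeval_le' _ (gP_deg j) P)
    have hdiv : mdeg (Q.divMonomial s) ≤ ((c - 1 : ℤ) : WithBot ℤ) := by
      rw [mdeg_le_iff] at hQd ⊢
      intro m hm
      rw [mem_support_iff, coeff_divMonomial] at hm
      have h2 := hQd (s + m) (mem_support_iff.mpr hm)
      have hsum : ((s + m).sum fun _ e => e) = 1 + (m.sum fun _ e => e) := by
        rw [Finsupp.sum_add_index' (fun _ => rfl) (fun _ _ _ => rfl), hs,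
          Finsupp.sum_single_index rfl]
      rw [hsum] at h2
      push_cast at h2 ⊢
      omega
    exact mdeg_transfer hdiv (fun h0 => by rw [h0, map_zero])
      (totalDegree_aeval_le' _ (gM_deg j) _)

lemma cancel_u (j : Fin n) {Q : MvPolynomial (Fin n ⊕ Fin n) R}
    (h : (X (Sum.inl j) - X (Sum.inr j)) * Q = 0) : Q = 0 := by
  have h2 := congrArg (aeval (gP (R := R) j)) h
  rw [map_mul, map_zero, map_sub, aeval_X, aeval_X] at h2
  have he : (gP (R := R) j) (Sum.inl j) - (gP (R := R) j) (Sum.inr j) = X (Sum.inl j) := by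
    simp [gP]
  rw [he] at h2
  have h3 : aeval (gP (R := R) j) Q = 0 := by
    ext m
    have h4 := congrArg (coeff (Finsupp.single (Sum.inl j) 1 + m)) h2
    rw [coeff_X_mul] at h4
    simpa using h4
  have h5 := congrArg (aeval (gM (R := R) j)) h3
  rw [aeval_gM_gP, map_zero] at h5
  exact h5

lemma key_syzygy (d : ℤ) : ∀ (j : ℕ), j ≤ n →
    ∀ E : Fin n → MvPolynomial (Fin n ⊕ Fin n) R,
    (∑ k ∈ Finset.univ.filter (fun k : Fin n => (k : ℕ) < j),
        (X (Sum.inl k) - X (Sum.inr k)) * E k) = 0 →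
    (∀ k : Fin n, (k : ℕ) < j → mdeg (E k) ≤ ((d - 1 : ℤ) : WithBot ℤ)) →
    ∃ T : Fin n → Fin n → MvPolynomial (Fin n ⊕ Fin n) R,
      (∀ k l : Fin n, k < l → (l : ℕ) < j → mdeg (T k l) ≤ ((d - 2 : ℤ) : WithBot ℤ)) ∧
      ∀ m : Fin n, (m : ℕ) < j →
        E m = (∑ k ∈ Finset.univ.filter (fun k => k < m),
                (X (Sum.inl k) - X (Sum.inr k)) * T k m) -
              ∑ l ∈ Finset.univ.filter (fun l => m < l ∧ (l : ℕ) < j),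
                (X (Sum.inl l) - X (Sum.inr l)) * T m l := by
  intro j
  induction j with
  | zero =>
    intro _ E _ _
    exact ⟨fun _ _ => 0, fun k l _ h => absurd h (Nat.not_lt_zero _),
      fun m hm => absurd hm (Nat.not_lt_zero _)⟩
  | succ j ih =>
    intro hj E hrel hdeg
    have hjn : j < n := hj
    set jf : Fin n := ⟨j, hjn⟩ with hjf
    have hjfv : (jf : ℕ) = j := rfl
    have hsplit : Finset.univ.filter (fun k : Fin n => (k : ℕ) < j + 1)
        = insert jf (Finset.univ.filter fun k : Fin n => (k : ℕ) < j) := by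
      ext k
      simp only [Finset.mem_filter, Finset.mem_insert, Finset.mem_univ, true_and,
        Fin.ext_iff, hjfv]
      omega
    have hnotmem : jf ∉ Finset.univ.filter (fun k : Fin n => (k : ℕ) < j) := by
      simp [hjfv]
    rw [hsplit, Finset.sum_insert hnotmem] at hrel
    set E' : Fin n → MvPolynomial (Fin n ⊕ Fin n) R := fun k => rename (fJ jf) (E k) with hE'
    have hfixed : ∀ k : Fin n, k ≠ jf →
        rename (fJ jf) ((X (Sum.inl k) - X (Sum.inr k)) * E k)
          = (X (Sum.inl k) - X (Sum.inr k)) * E' k := by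
      intro k hk
      rw [map_mul, map_sub, rename_X, rename_X]
      have h1 : fJ jf (Sum.inl k) = Sum.inl k := by
        simp only [fJ, if_neg (fun h => hk (Sum.inl.inj h))]
      have h2 : fJ jf (Sum.inr k) = Sum.inr k := by
        simp [fJ]
      rw [h1, h2, hE']
    have hrel' : (∑ k ∈ Finset.univ.filter (fun k : Fin n => (k : ℕ) < j),
        (X (Sum.inl k) - X (Sum.inr k)) * E' k) = 0 := by
      have hthis := congrArg (rename (fJ jf)) hrel
      rw [map_add, map_mul, map_sub, rename_X, rename_X, map_sum, map_zero] at hthis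
      have hj0 : (X (fJ jf (Sum.inl jf)) : MvPolynomial (Fin n ⊕ Fin n) R)
          - X (fJ jf (Sum.inr jf)) = 0 := by
        simp [fJ]
      rw [hj0, zero_mul, zero_add] at hthis
      rw [← hthis]
      apply Finset.sum_congr rfl
      intro k hk
      have hk' : k ≠ jf := by
        simp only [Finset.mem_filter, Finset.mem_univ, true_and] at hk
        intro h
        rw [h, hjfv] at hk
        exact absurd hk (lt_irrefl j)
      exact (hfixed k hk').symm
    have hdivex : ∀ k : Fin n, ∃ H, E k - E' k = (X (Sum.inl jf) - X (Sum.inr jf)) * H ∧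
        ∀ c : ℤ, mdeg (E k - E' k) ≤ (c : WithBot ℤ) → mdeg H ≤ ((c - 1 : ℤ) : WithBot ℤ) := by
      intro k
      apply exists_div
      have hff : fJ (n := n) jf ∘ fJ jf = fJ jf := by
        funext v
        by_cases h : v = Sum.inl jf <;> simp [fJ, h]
      rw [map_sub, hE']
      simp only
      rw [rename_rename, hff, sub_self]
    choose H hH hHd using hdivex
    obtain ⟨T', hT'b, hT'rel⟩ := ih (Nat.le_of_lt hjn) E' hrel'
      (fun k hk => mdeg_rename_le _ (hdeg k (Nat.lt_succ_of_lt hk)))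
    have hsum2 : ∑ k ∈ Finset.univ.filter (fun k : Fin n => (k : ℕ) < j),
          (X (Sum.inl k) - X (Sum.inr k)) * E k
        = (∑ k ∈ Finset.univ.filter (fun k : Fin n => (k : ℕ) < j),
            (X (Sum.inl k) - X (Sum.inr k)) * E' k)
          + (X (Sum.inl jf) - X (Sum.inr jf))
            * ∑ k ∈ Finset.univ.filter (fun k : Fin n => (k : ℕ) < j),
                (X (Sum.inl k) - X (Sum.inr k)) * H k := by
      rw [Finset.mul_sum, ← Finset.sum_add_distrib]
      apply Finset.sum_congr rfl
      intro k _
      linear_combination (X (Sum.inl k) - X (Sum.inr k)) * (hH k)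
    have h1 : (X (Sum.inl jf) - X (Sum.inr jf)) *
        (E jf + ∑ k ∈ Finset.univ.filter (fun k : Fin n => (k : ℕ) < j),
          (X (Sum.inl k) - X (Sum.inr k)) * H k) = 0 := by
      rw [hsum2, hrel'] at hrel
      linear_combination hrel
    have h3 := cancel_u jf h1
    have hEjf : E jf = -∑ k ∈ Finset.univ.filter (fun k : Fin n => (k : ℕ) < j),
        (X (Sum.inl k) - X (Sum.inr k)) * H k := by
      linear_combination h3
    refine ⟨fun k l => if (l : ℕ) = j then -H k else T' k l, ?_, ?_⟩
    · intro k l hkl hl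
      by_cases hlj : (l : ℕ) = j
      · simp only [if_pos hlj]
        have hkj : (k : ℕ) < j := by
          have := hkl
          rw [Fin.lt_def, hlj] at this
          exact this
        have hsub : mdeg (E k - E' k) ≤ ((d - 1 : ℤ) : WithBot ℤ) :=
          mdeg_sub_le (hdeg k (Nat.lt_succ_of_lt hkj))
            (mdeg_rename_le _ (hdeg k (Nat.lt_succ_of_lt hkj)))
        have hb := hHd k (d - 1) hsub
        have he : ((d : ℤ) - 1 - 1) = d - 2 := by ring
        rw [he] at hb
        exact mdeg_neg_le hb
      · have hl' : (l : ℕ) < j := by omega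
        simp only [if_neg hlj]
        exact hT'b k l hkl hl'
    · intro m hm
      by_cases hmj : (m : ℕ) = j
      · have hmjf : m = jf := Fin.val_injective (by rw [hmj, hjfv])
        subst hmjf
        have hempty : Finset.univ.filter (fun l : Fin n => jf < l ∧ (l : ℕ) < j + 1) = ∅ := by
          ext l
          simp only [Finset.mem_filter, Finset.mem_univ, true_and, Fin.lt_def,
            Finset.notMem_empty, iff_false, not_and, hjfv]
          omega
        have hfilter : Finset.univ.filter (fun k : Fin n => k < jf)
            = Finset.univ.filter (fun k : Fin n => (k : ℕ) < j) := by
          ext k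
          simp only [Finset.mem_filter, Finset.mem_univ, true_and, Fin.lt_def, hjfv]
        rw [hempty, Finset.sum_empty, sub_zero, hfilter, hEjf, ← Finset.sum_neg_distrib]
        apply Finset.sum_congr rfl
        intro k _
        simp [hmj]
      · have hm' : (m : ℕ) < j := by omega
        have hrelm := hT'rel m hm'
        have hinsert : Finset.univ.filter (fun l : Fin n => m < l ∧ (l : ℕ) < j + 1)
            = insert jf (Finset.univ.filter fun l : Fin n => m < l ∧ (l : ℕ) < j) := by
          ext l
          simp only [Finset.mem_filter, Finset.mem_insert, Finset.mem_univ, true_and,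
            Fin.lt_def, Fin.ext_iff, hjfv]
          omega
        have hnot2 : jf ∉ Finset.univ.filter (fun l : Fin n => m < l ∧ (l : ℕ) < j) := by
          simp [hjfv]
        rw [hinsert, Finset.sum_insert hnot2]
        beta_reduce
        have hEm : E m = E' m + (X (Sum.inl jf) - X (Sum.inr jf)) * H m := by
          linear_combination hH m
        have hs1 : ∑ k ∈ Finset.univ.filter (fun k : Fin n => k < m),
              (X (Sum.inl k) - X (Sum.inr k))
                * (if (m : ℕ) = j then -H k else T' k m)
            = ∑ k ∈ Finset.univ.filter (fun k : Fin n => k < m),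
              (X (Sum.inl k) - X (Sum.inr k)) * T' k m :=
          Finset.sum_congr rfl (fun k _ => by rw [if_neg hmj])
        have hs2 : ∑ l ∈ Finset.univ.filter (fun l : Fin n => m < l ∧ (l : ℕ) < j),
              (X (Sum.inl l) - X (Sum.inr l))
                * (if (l : ℕ) = j then -H m else T' m l)
            = ∑ l ∈ Finset.univ.filter (fun l : Fin n => m < l ∧ (l : ℕ) < j),
              (X (Sum.inl l) - X (Sum.inr l)) * T' m l := by
          apply Finset.sum_congr rfl
          intro l hl
          simp only [Finset.mem_filter, Finset.mem_univ, true_and] at hl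
          rw [if_neg (Nat.ne_of_lt hl.2)]
        rw [hs1, hs2, if_pos hjfv, hEm, hrelm]
        ring

end AuxV

/-- two difference derivatives of `F` of componentwise degree `≤ d - 1`
differ by a combination of the trivial syzygies `(x_k - y_k)·û_l - (x_l - y_l)·û_k`
with coefficients `T^{kl}` of degree `≤ d - 2`. -/
theorem diffDeriv_sub_eq {R : Type*} [CommRing R] {n : ℕ}
    (d : ℤ) (F : MvPolynomial (Fin n) R) (hF : mdeg F ≤ (d : WithBot ℤ))
    (D' D'' : Fin n → MvPolynomial (Fin n ⊕ Fin n) R)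
    (hD' : IsDiffDeriv F D') (hD'' : IsDiffDeriv F D'')
    (hdeg' : ∀ k, mdeg (D' k) ≤ ((d - 1 : ℤ) : WithBot ℤ))
    (hdeg'' : ∀ k, mdeg (D'' k) ≤ ((d - 1 : ℤ) : WithBot ℤ)) :
    ∃ T : Fin n → Fin n → MvPolynomial (Fin n ⊕ Fin n) R,
      (∀ k l, k < l → mdeg (T k l) ≤ ((d - 2 : ℤ) : WithBot ℤ)) ∧
      ∀ m : Fin n,
        D' m - D'' m =
          (∑ k ∈ Finset.univ.filter (fun k => k < m),
            (X (Sum.inl k) - X (Sum.inr k)) * T k m) -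
          ∑ l ∈ Finset.univ.filter (fun l => m < l),
            (X (Sum.inl l) - X (Sum.inr l)) * T m l := by
  have e1 := hD'
  have e2 := hD''
  unfold IsDiffDeriv at e1 e2
  have hrel : (∑ k ∈ Finset.univ.filter (fun k : Fin n => (k : ℕ) < n),
      (X (Sum.inl k) - X (Sum.inr k)) * (D' k - D'' k)) = 0 := by
    have hfu : Finset.univ.filter (fun k : Fin n => (k : ℕ) < n) = Finset.univ := by
      ext k
      simp [k.isLt]
    rw [hfu]
    have hsplit : ∑ k : Fin n, (X (Sum.inl k) - X (Sum.inr k)) * (D' k - D'' k)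
        = (∑ k : Fin n, (X (Sum.inl k) - X (Sum.inr k)) * D' k)
          - ∑ k : Fin n, (X (Sum.inl k) - X (Sum.inr k)) * D'' k := by
      rw [← Finset.sum_sub_distrib]
      apply Finset.sum_congr rfl
      intro k _
      ring
    rw [hsplit, e1, e2, sub_self]
  obtain ⟨T, hTb, hTrel⟩ := key_syzygy d n le_rfl (fun k => D' k - D'' k) hrel
    (fun k _ => mdeg_sub_le (hdeg' k) (hdeg'' k))
  refine ⟨T, fun k l hkl => hTb k l hkl l.isLt, fun m => ?_⟩
  have h := hTrel m m.isLt
  have hfilter : Finset.univ.filter (fun l : Fin n => m < l ∧ (l : ℕ) < n)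
      = Finset.univ.filter (fun l : Fin n => m < l) := by
    ext l
    simp [l.isLt]
  rw [hfilter] at h
  exact h

end
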